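/- Suppose w, z ∈ dom h satisfy ‖w − ẑ‖² ≤ 18λτ/(1+λμ), ‖z − ẑ‖² ≤ 9(2+λμ)λτ/(1+λμ), and D_h(w, ẑ) ≤ 3τ + 48(1+λL)τ/(1+λμ). Then φ^λ(w) − φ^λ(ẑ) + ((1+λμ)/(λ(2+λμ)))‖z − ẑ‖² ≤ 12τ + 57κτ, where κ := L/μ. -/

import Mathlib

open scoped RealInnerProductSpace

lemma fderiv_apply_eq_inner_gradient {d : ℕ} (f : EuclideanSpace ℝ (Fin d) → ℝ)
    (hf : Differentiable ℝ f) (x v : EuclideanSpace ℝ (Fin d)) :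
    fderiv ℝ f x v = ⟪gradient f x, v⟫ := by
  have h1 : HasFDerivAt f ((InnerProductSpace.toDual ℝ _) (gradient f x)) x :=
    hasGradientAt_iff_hasFDerivAt.mp (hf x).hasGradientAt
  rw [h1.fderiv]
  exact InnerProductSpace.toDual_apply_apply

lemma descent_lemma {d : ℕ} (f : EuclideanSpace ℝ (Fin d) → ℝ) (hf : Differentiable ℝ f)
    (L : ℝ) (hL : 0 ≤ L)
    (hLip : ∀ x y, ‖gradient f x - gradient f y‖ ≤ L * ‖x - y‖)
    (a b : EuclideanSpace ℝ (Fin d)) :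
    f b ≤ f a + ⟪gradient f a, b - a⟫ + L / 2 * ‖b - a‖ ^ 2 := by
  set v := b - a with hv
  set ψ : ℝ → ℝ := fun t => f (a + t • v) - t * ⟪gradient f a, v⟫ - L * t ^ 2 / 2 * ‖v‖ ^ 2
    with hψ
  have hline : ∀ t : ℝ, HasDerivAt (fun t : ℝ => a + t • v) v t := by
    intro t
    simpa using ((hasDerivAt_id t).smul_const v).const_add a
  have hderiv : ∀ t : ℝ, HasDerivAt ψ
      (⟪gradient f (a + t • v), v⟫ - ⟪gradient f a, v⟫ - L * t * ‖v‖ ^ 2) t := by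
    intro t
    have h1 : HasDerivAt (fun t : ℝ => f (a + t • v)) (⟪gradient f (a + t • v), v⟫) t := by
      have := (hf (a + t • v)).hasFDerivAt.comp_hasDerivAt t (hline t)
      rwa [fderiv_apply_eq_inner_gradient f hf] at this
    have h2 : HasDerivAt (fun t : ℝ => t * ⟪gradient f a, v⟫) (⟪gradient f a, v⟫) t := by
      simpa using (hasDerivAt_id t).mul_const (⟪gradient f a, v⟫)
    have h3 : HasDerivAt (fun t : ℝ => L * t ^ 2 / 2 * ‖v‖ ^ 2) (L * t * ‖v‖ ^ 2) t := by
      have := (((hasDerivAt_pow 2 t).const_mul L).div_const 2).mul_const (‖v‖ ^ 2)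
      exact this.congr_deriv (by rw [show (2:ℕ) - 1 = 1 from rfl, pow_one]; push_cast; ring)
    exact (h1.sub h2).sub h3
  have hmono : AntitoneOn ψ (Set.Icc 0 1) := by
    apply antitoneOn_of_deriv_nonpos (convex_Icc 0 1)
    · exact fun t _ => ((hderiv t).continuousAt).continuousWithinAt
    · exact fun t _ => ((hderiv t).differentiableAt).differentiableWithinAt
    · intro t ht
      rw [(hderiv t).deriv]
      rw [interior_Icc] at ht
      have h4 : ⟪gradient f (a + t • v), v⟫ - ⟪gradient f a, v⟫
          = ⟪gradient f (a + t • v) - gradient f a, v⟫ := by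
        rw [inner_sub_left]
      rw [h4]
      have h5 : ⟪gradient f (a + t • v) - gradient f a, v⟫
          ≤ ‖gradient f (a + t • v) - gradient f a‖ * ‖v‖ := real_inner_le_norm _ _
      have h6 : ‖gradient f (a + t • v) - gradient f a‖ ≤ L * ‖t • v‖ := by
        simpa using hLip (a + t • v) a
      have h7 : ‖t • v‖ = t * ‖v‖ := by
        rw [norm_smul, Real.norm_eq_abs, abs_of_pos ht.1]
      nlinarith [norm_nonneg v, mul_nonneg hL (norm_nonneg v)]
  have := hmono (Set.left_mem_Icc.mpr zero_le_one) (Set.right_mem_Icc.mpr zero_le_one) zero_le_one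
  simp only [hψ] at this
  have hb : a + (1 : ℝ) • v = b := by simp [hv]
  have h0 : a + (0:ℝ) • v = a := by simp
  rw [hb, h0] at this
  norm_num at this
  have hip : (fderiv ℝ f a) v = ⟪gradient f a, v⟫ := fderiv_apply_eq_inner_gradient f hf a v
  rw [hip] at this
  linarith


/-- With `φ^λ(x) = f(x) + h(x) + (1/(2λ))‖x - z̄‖²`,
`ẑ = argmin φ^λ`, and `D_h(x, ẑ) = h(x) - h(ẑ) + ⟨∇f(ẑ) + (ẑ - z̄)/λ, x - ẑ⟩`:
if `w, z ∈ dom h` satisfy `‖w - ẑ‖² ≤ 18λτ/(1+λμ)`,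
`‖z - ẑ‖² ≤ 9(2+λμ)λτ/(1+λμ)` and `D_h(w, ẑ) ≤ 3τ + 48(1+λL)τ/(1+λμ)`, then
`φ^λ(w) - φ^λ(ẑ) + ((1+λμ)/(λ(2+λμ)))‖z - ẑ‖² ≤ 12τ + 57κτ` where `κ = L/μ`. -/
theorem stmt_17 {d : ℕ} (f : EuclideanSpace ℝ (Fin d) → ℝ) (hf : Differentiable ℝ f)
    (L μ : ℝ) (hL : 0 < L) (hμ : 0 < μ) (hμL : μ ≤ L)
    (hLip : ∀ x y, ‖gradient f x - gradient f y‖ ≤ L * ‖x - y‖)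
    (hsc : ConvexOn ℝ Set.univ (fun x => f x - μ / 2 * ‖x‖ ^ 2))
    (s : Set (EuclideanSpace ℝ (Fin d))) (hs : s.Nonempty) (hcl : IsClosed s)
    (h : EuclideanSpace ℝ (Fin d) → ℝ) (hconv : ConvexOn ℝ s h)
    (hlsc : LowerSemicontinuousOn h s)
    (lam τ : ℝ) (hlam : 0 < lam) (hτ : 0 < τ) (zbar : EuclideanSpace ℝ (Fin d))
    (philam : EuclideanSpace ℝ (Fin d) → ℝ)
    (hphilam : ∀ x, philam x = f x + h x + 1 / (2 * lam) * ‖x - zbar‖ ^ 2)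
    -- `ẑ` is the (unique) minimizer of `φ^λ`:
    (zhat : EuclideanSpace ℝ (Fin d)) (hzhat_mem : zhat ∈ s)
    (hzhat_min : ∀ x ∈ s, philam zhat ≤ philam x)
    (Dh : EuclideanSpace ℝ (Fin d) → ℝ)
    (hDh : ∀ x, Dh x = h x - h zhat + ⟪gradient f zhat + lam⁻¹ • (zhat - zbar), x - zhat⟫)
    (w z : EuclideanSpace ℝ (Fin d)) (hw : w ∈ s) (hz : z ∈ s)
    (hwb : ‖w - zhat‖ ^ 2 ≤ 18 * lam * τ / (1 + lam * μ))
    (hzb : ‖z - zhat‖ ^ 2 ≤ 9 * (2 + lam * μ) * lam * τ / (1 + lam * μ))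
    (hDhb : Dh w ≤ 3 * τ + 48 * (1 + lam * L) * τ / (1 + lam * μ)) :
    philam w - philam zhat + (1 + lam * μ) / (lam * (2 + lam * μ)) * ‖z - zhat‖ ^ 2 ≤
      12 * τ + 57 * (L / μ) * τ := by

  have hM : (0:ℝ) < 1 + lam * μ := by positivity
  -- Key inequality from the descent lemma
  have hkey : philam w - philam zhat ≤ Dh w + (L / 2 + 1 / (2 * lam)) * ‖w - zhat‖ ^ 2 := by
    rw [hphilam w, hphilam zhat, hDh w]
    have hdesc := descent_lemma f hf L hL.le hLip zhat w
    have hexp : ‖w - zbar‖ ^ 2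
        = ‖w - zhat‖ ^ 2 + 2 * ⟪w - zhat, zhat - zbar⟫ + ‖zhat - zbar‖ ^ 2 := by
      have hws : w - zbar = (w - zhat) + (zhat - zbar) := by abel
      rw [hws, norm_add_sq_real]
    have hin : ⟪gradient f zhat + lam⁻¹ • (zhat - zbar), w - zhat⟫
        = ⟪gradient f zhat, w - zhat⟫ + lam⁻¹ * ⟪zhat - zbar, w - zhat⟫ := by
      rw [inner_add_left, real_inner_smul_left]
    rw [hin, hexp]
    have hcomm : ⟪w - zhat, zhat - zbar⟫ = ⟪zhat - zbar, w - zhat⟫ := real_inner_comm _ _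
    have hl2 : 1 / (2 * lam) * (2 * ⟪zhat - zbar, w - zhat⟫)
        = lam⁻¹ * ⟪zhat - zbar, w - zhat⟫ := by
      field_simp
    rw [hcomm] at *
    nlinarith [hdesc, hl2]
  -- bound the w-term
  have hwb' : ‖w - zhat‖ ^ 2 * (1 + lam * μ) ≤ 18 * lam * τ := (le_div_iff₀ hM).mp hwb
  have hcw : (0:ℝ) ≤ L / 2 + 1 / (2 * lam) := by positivity
  have term2 : (L / 2 + 1 / (2 * lam)) * ‖w - zhat‖ ^ 2
      ≤ 9 * (1 + lam * L) * τ / (1 + lam * μ) := by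
    rw [le_div_iff₀ hM]
    have h1 := mul_le_mul_of_nonneg_left hwb' hcw
    have h2 : (L / 2 + 1 / (2 * lam)) * (18 * lam * τ) = 9 * (1 + lam * L) * τ := by
      field_simp <;> ring
    linarith [h1, h2.le, h2.ge]
  -- bound the z-term
  have hcz : (0:ℝ) ≤ (1 + lam * μ) / (lam * (2 + lam * μ)) := by positivity
  have term3 : (1 + lam * μ) / (lam * (2 + lam * μ)) * ‖z - zhat‖ ^ 2 ≤ 9 * τ := by
    have h1 := mul_le_mul_of_nonneg_left hzb hcz
    have h2 : (1 + lam * μ) / (lam * (2 + lam * μ))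
        * (9 * (2 + lam * μ) * lam * τ / (1 + lam * μ)) = 9 * τ := by
      field_simp <;> ring
    linarith [h1, h2.le]
  -- combine
  have hfinal : philam w - philam zhat
      + (1 + lam * μ) / (lam * (2 + lam * μ)) * ‖z - zhat‖ ^ 2
      ≤ 12 * τ + 57 * (1 + lam * L) * τ / (1 + lam * μ) := by
    have h48 : 48 * (1 + lam * L) * τ / (1 + lam * μ)
        + 9 * (1 + lam * L) * τ / (1 + lam * μ)
        = 57 * (1 + lam * L) * τ / (1 + lam * μ) := by ring
    linarith [hkey, term2, term3, hDhb]
  have hq : (1 + lam * L) / (1 + lam * μ) ≤ L / μ := by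
    rw [div_le_div_iff₀ hM hμ]
    nlinarith
  have hlast : 57 * (1 + lam * L) * τ / (1 + lam * μ) ≤ 57 * (L / μ) * τ :=
    calc 57 * (1 + lam * L) * τ / (1 + lam * μ)
        = 57 * τ * ((1 + lam * L) / (1 + lam * μ)) := by ring
      _ ≤ 57 * τ * (L / μ) := mul_le_mul_of_nonneg_left hq (by positivity)
      _ = 57 * (L / μ) * τ := by ring
  linarith [hfinal, hlast]
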